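/- Let a₀, a₁, a₂, a₃, a₄ be nonzero real numbers with a₁·a₄ > 0, and define G(x,y) = a₀y² − a₁xy² − a₂xy − a₃x² − a₄x³. Then the origin (0,0) is an isolated point of the curve {(x,y) ∈ ℝ² : G(x,y) = 0} — i.e., there exists ε > 0 such that every (x,y) with G(x,y) = 0 and ‖(x,y)‖ < ε equals (0,0) — if and only if 4·a₀·a₃ + a₂² < 0 (equivalently, a₀a₃/a₁² + (a₂/(2a₁))² < 0, the Hessian determinant of G at the origin being −(4a₀a₃ + a₂²)). -/

import Mathlib

/-- The cubic polynomial `G(x,y) = a₀y² − a₁xy² − a₂xy − a₃x² − a₄x³`. -/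
def cubicG (a₀ a₁ a₂ a₃ a₄ x y : ℝ) : ℝ :=
  a₀ * y ^ 2 - a₁ * x * y ^ 2 - a₂ * x * y - a₃ * x ^ 2 - a₄ * x ^ 3

lemma cubic_key (a₀ a₁ a₂ a₃ a₄ x y : ℝ) :
    (2*(a₀ - a₁*x)*y - a₂*x)^2
      - x^2*((4*a₀*a₃ + a₂^2) + 4*(a₀*a₄ - a₁*a₃)*x - 4*(a₁*a₄)*x^2)
    = 4*(a₀ - a₁*x) * cubicG a₀ a₁ a₂ a₃ a₄ x y := by
  unfold cubicG; ring

lemma cubic_bwd (a₀ a₁ a₂ a₃ a₄ : ℝ)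
    (h₀ : a₀ ≠ 0) (h : a₁ * a₄ > 0) (hΔ : 4 * a₀ * a₃ + a₂ ^ 2 < 0) :
    (∃ ε > (0 : ℝ), ∀ x y : ℝ, cubicG a₀ a₁ a₂ a₃ a₄ x y = 0 →
        Real.sqrt (x ^ 2 + y ^ 2) < ε → (x, y) = ((0 : ℝ), (0 : ℝ))) := by
  set Δ : ℝ := 4 * a₀ * a₃ + a₂ ^ 2 with hΔdef
  set b : ℝ := a₀ * a₄ - a₁ * a₃ with hbdef
  refine ⟨(-Δ) / (4 * |b| + 1), div_pos (by linarith) (by positivity), ?_⟩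
  intro x y hG hnorm
  have hxe : |x| < (-Δ) / (4 * |b| + 1) := by
    calc |x| = Real.sqrt (x ^ 2) := (Real.sqrt_sq_eq_abs x).symm
    _ ≤ Real.sqrt (x ^ 2 + y ^ 2) := Real.sqrt_le_sqrt (by nlinarith [sq_nonneg y])
    _ < _ := hnorm
  by_cases hx : x = 0
  · subst hx
    have : a₀ * y ^ 2 = 0 := by
      have := hG; unfold cubicG at this; linarith [this]
    have hy : y = 0 := by
      rcases mul_eq_zero.mp this with h' | h'
      · exact absurd h' h₀
      · exact pow_eq_zero_iff (n := 2) (by norm_num) |>.mp h'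
    simp [hy]
  · exfalso
    have hx2 : 0 < x ^ 2 := by positivity
    have hbx : 4 * b * x ≤ 4 * |b| * |x| := by
      have := abs_mul b x
      nlinarith [le_abs_self (b * x)]
    have hD : Δ + 4 * b * x - 4 * (a₁ * a₄) * x ^ 2 < 0 := by
      have h1 : (4 * |b| + 1) * |x| < (4 * |b| + 1) * ((-Δ) / (4 * |b| + 1)) := by
        have : (0:ℝ) < 4 * |b| + 1 := by positivity
        exact mul_lt_mul_of_pos_left hxe this
      have h2 : (4 * |b| + 1) * ((-Δ) / (4 * |b| + 1)) = -Δ := by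
        field_simp
      nlinarith [abs_nonneg x, abs_nonneg b, mul_pos h hx2]
    have hkey := cubic_key a₀ a₁ a₂ a₃ a₄ x y
    rw [hG, ← hΔdef, ← hbdef] at hkey
    nlinarith [sq_nonneg (2*(a₀ - a₁*x)*y - a₂*x), mul_pos hx2 (neg_pos.mpr hD)]

lemma cubic_fwd (a₀ a₁ a₂ a₃ a₄ : ℝ)
    (h₀ : a₀ ≠ 0) (h₁ : a₁ ≠ 0) (h₂ : a₂ ≠ 0)
    (h : a₁ * a₄ > 0) (hΔ : 0 ≤ 4 * a₀ * a₃ + a₂ ^ 2) (ε : ℝ) (hε : 0 < ε) :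
    ∃ x y : ℝ, cubicG a₀ a₁ a₂ a₃ a₄ x y = 0 ∧
      Real.sqrt (x ^ 2 + y ^ 2) < ε ∧ (x, y) ≠ ((0 : ℝ), (0 : ℝ)) := by
  set Δ : ℝ := 4 * a₀ * a₃ + a₂ ^ 2 with hΔdef
  set b : ℝ := a₀ * a₄ - a₁ * a₃ with hbdef
  clear_value Δ b
  -- c := Δ + 4|b| is positive
  have hc : 0 < Δ + 4 * |b| := by
    rcases hΔ.lt_or_eq with h' | h'
    · have : (0:ℝ) ≤ |b| := abs_nonneg b
      linarith
    · -- Δ = 0; show b ≠ 0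
      have hΔ0 : Δ = 0 := h'.symm
      have hb : b ≠ 0 := by
        intro hb0
        have e1 : a₀ * a₄ = a₁ * a₃ := by
          have := hbdef ▸ hb0; linarith [this]
        have e2 : a₀ * a₃ = -(a₂ ^ 2) / 4 := by
          have := hΔdef ▸ hΔ0; linarith [this]
        have e3 : (a₀ * a₄) ^ 2 = (a₁ * a₄) * (a₀ * a₃) := by
          calc (a₀ * a₄) ^ 2 = (a₀ * a₄) * (a₁ * a₃) := by rw [← e1]; ring
          _ = (a₁ * a₄) * (a₀ * a₃) := by ring
        rw [e2] at e3
        have ha2 : (0:ℝ) < a₂ ^ 2 := by positivity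
        nlinarith [sq_nonneg (a₀ * a₄), mul_pos h ha2]
      have : 0 < |b| := abs_pos.mpr hb
      linarith
  obtain ⟨σ, hσ2, hσb⟩ : ∃ σ : ℝ, σ ^ 2 = 1 ∧ σ * b = |b| := by
    rcases le_or_gt 0 b with hb | hb
    · exact ⟨1, by norm_num, by rw [abs_of_nonneg hb]; ring⟩
    · exact ⟨-1, by norm_num, by rw [abs_of_neg hb]; ring⟩
  set C : ℝ := (|a₂| + Real.sqrt (Δ + 4 * |b|)) / |a₀| with hCdef
  have hC0 : 0 ≤ C := by
    rw [hCdef]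
    exact div_nonneg (add_nonneg (abs_nonneg _) (Real.sqrt_nonneg _)) (abs_nonneg _)
  clear_value C
  have h1C : (0:ℝ) < 1 + C := by linarith
  set t : ℝ := min (min 1 ((Δ + 4 * |b|) / (4 * (a₁ * a₄))))
      (min (|a₀| / (2 * |a₁|)) (ε / (2 * (1 + C)))) with htdef
  have ht : 0 < t := by
    rw [htdef]
    refine lt_min (lt_min one_pos (div_pos hc (by positivity))) (lt_min ?_ ?_)
    · exact div_pos (abs_pos.mpr h₀) (mul_pos two_pos (abs_pos.mpr h₁))
    · exact div_pos hε (by positivity)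
  clear_value t
  have ht1 : t ≤ 1 := by rw [htdef]; exact (min_le_left _ _).trans (min_le_left _ _)
  have ht2 : t ≤ (Δ + 4 * |b|) / (4 * (a₁ * a₄)) := by
    rw [htdef]; exact (min_le_left _ _).trans (min_le_right _ _)
  have ht3 : t ≤ |a₀| / (2 * |a₁|) := by rw [htdef]; exact (min_le_right _ _).trans (min_le_left _ _)
  have ht4 : t ≤ ε / (2 * (1 + C)) := by rw [htdef]; exact (min_le_right _ _).trans (min_le_right _ _)
  have hx2 : (σ * t) ^ 2 = t ^ 2 := by linear_combination t ^ 2 * hσ2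
  have hxabs : |σ * t| = t := by
    rw [← Real.sqrt_sq_eq_abs, hx2, Real.sqrt_sq ht.le]
  have hxne : σ * t ≠ 0 := by
    intro h0
    rw [h0, abs_zero] at hxabs
    linarith
  set A : ℝ := a₀ - a₁ * (σ * t) with hAdef
  have hAbound : |a₀| / 2 ≤ |A| := by
    have e1 : |a₁ * (σ * t)| = |a₁| * t := by rw [abs_mul, hxabs]
    have e2 : |a₁| * t ≤ |a₁| * (|a₀| / (2 * |a₁|)) :=
      mul_le_mul_of_nonneg_left ht3 (abs_nonneg a₁)
    have e3 : |a₁| * (|a₀| / (2 * |a₁|)) = |a₀| / 2 := by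
      have : |a₁| ≠ 0 := abs_ne_zero.mpr h₁
      field_simp
    have e4 : |a₀| - |a₁ * (σ * t)| ≤ |A| := by
      rw [hAdef]; exact abs_sub_abs_le_abs_sub a₀ (a₁ * (σ * t))
    rw [e1] at e4
    linarith [e2, e3 ▸ e2]
  have hAne : A ≠ 0 := by
    intro h0
    rw [h0, abs_zero] at hAbound
    have : 0 < |a₀| := abs_pos.mpr h₀
    linarith
  clear_value A
  -- the discriminant value (in t-form)
  set Dv : ℝ := Δ + 4 * |b| * t - 4 * (a₁ * a₄) * t ^ 2 with hDvdef
  clear_value Dv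
  have h2' : t * (4 * (a₁ * a₄)) ≤ Δ + 4 * |b| := (le_div_iff₀ (by positivity)).mp ht2
  have hDv0 : 0 ≤ Dv := by
    have p1 : t * (t * (4 * (a₁ * a₄))) ≤ t * (Δ + 4 * |b|) :=
      mul_le_mul_of_nonneg_left h2' ht.le
    have p2 : Δ * t ≤ Δ * 1 := mul_le_mul_of_nonneg_left ht1 hΔ
    have p3 : 0 ≤ 4 * |b| * t := mul_nonneg (by positivity) ht.le
    rw [hDvdef]; nlinarith [p1, p2, p3]
  have hDvc : Dv ≤ Δ + 4 * |b| := by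
    have p1 : 4 * |b| * t ≤ 4 * |b| * 1 :=
      mul_le_mul_of_nonneg_left ht1 (by positivity)
    have p2 : 0 ≤ 4 * (a₁ * a₄) * t ^ 2 := by
      have := sq_nonneg t; nlinarith
    rw [hDvdef]; linarith
  have hs : Real.sqrt Dv ≤ Real.sqrt (Δ + 4 * |b|) := Real.sqrt_le_sqrt hDvc
  have hsnn : 0 ≤ Real.sqrt Dv := Real.sqrt_nonneg _
  set y : ℝ := (a₂ * (σ * t) + t * Real.sqrt Dv) / (2 * A) with hydef
  clear_value y
  refine ⟨σ * t, y, ?_, ?_, ?_⟩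
  · -- G = 0
    have h2A : 2 * A * y - a₂ * (σ * t) = t * Real.sqrt Dv := by
      rw [hydef]; field_simp; ring
    have hsq : (t * Real.sqrt Dv) ^ 2 = t ^ 2 * Dv := by
      rw [mul_pow, Real.sq_sqrt hDv0]
    have hconv : (σ * t) ^ 2 * ((4 * a₀ * a₃ + a₂ ^ 2) + 4 * (a₀ * a₄ - a₁ * a₃) * (σ * t)
        - 4 * (a₁ * a₄) * (σ * t) ^ 2) = t ^ 2 * Dv := by
      rw [hDvdef, ← hΔdef, ← hbdef]
      linear_combination (t ^ 2 * Δ + 4 * t ^ 3 * b * σ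
        - 4 * (a₁ * a₄) * t ^ 4 * (σ ^ 2 + 1)) * hσ2 + 4 * t ^ 3 * hσb
    have hkey := cubic_key a₀ a₁ a₂ a₃ a₄ (σ * t) y
    rw [← hAdef, h2A, hsq, hconv] at hkey
    have h4A : (4 : ℝ) * A ≠ 0 := mul_ne_zero (by norm_num) hAne
    have : 4 * A * cubicG a₀ a₁ a₂ a₃ a₄ (σ * t) y = 0 := by linarith
    exact (mul_eq_zero.mp this).resolve_left h4A
  · -- norm bound
    have h2Aabs : |a₀| ≤ |2 * A| := by
      rw [abs_mul]
      have : |(2:ℝ)| = 2 := by norm_num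
      rw [this]; linarith
    have hnum : |a₂ * (σ * t) + t * Real.sqrt Dv|
        ≤ t * (|a₂| + Real.sqrt (Δ + 4 * |b|)) := by
      calc |a₂ * (σ * t) + t * Real.sqrt Dv| ≤ |a₂ * (σ * t)| + |t * Real.sqrt Dv| :=
          abs_add_le _ _
      _ = |a₂| * t + t * Real.sqrt Dv := by
          rw [abs_mul, hxabs, abs_of_nonneg (mul_nonneg ht.le hsnn)]
      _ ≤ |a₂| * t + t * Real.sqrt (Δ + 4 * |b|) := by
          have := mul_le_mul_of_nonneg_left hs ht.le
          linarith
      _ = t * (|a₂| + Real.sqrt (Δ + 4 * |b|)) := by ring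
    have hy : |y| ≤ t * C := by
      have e1 : |y| = |a₂ * (σ * t) + t * Real.sqrt Dv| / |2 * A| := by
        rw [hydef, abs_div]
      rw [e1]
      calc |a₂ * (σ * t) + t * Real.sqrt Dv| / |2 * A|
          ≤ t * (|a₂| + Real.sqrt (Δ + 4 * |b|)) / |a₀| :=
            div_le_div₀ (mul_nonneg ht.le (add_nonneg (abs_nonneg _) (Real.sqrt_nonneg _)))
              hnum (abs_pos.mpr h₀) h2Aabs
      _ = t * C := by rw [hCdef, mul_div_assoc]
    have hyb : y ^ 2 ≤ (t * C) ^ 2 := by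
      have := pow_le_pow_left₀ (abs_nonneg y) hy 2
      rwa [sq_abs] at this
    have hsum : (σ * t) ^ 2 + y ^ 2 ≤ (t * (1 + C)) ^ 2 := by
      rw [hx2]
      have h1 : 0 ≤ 2 * (t ^ 2 * C) := mul_nonneg (by norm_num)
        (mul_nonneg (sq_nonneg t) hC0)
      have h2 : (t * (1 + C)) ^ 2 = t ^ 2 + 2 * (t ^ 2 * C) + (t * C) ^ 2 := by ring
      linarith
    calc Real.sqrt ((σ * t) ^ 2 + y ^ 2) ≤ Real.sqrt ((t * (1 + C)) ^ 2) :=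
        Real.sqrt_le_sqrt hsum
    _ = t * (1 + C) := Real.sqrt_sq (mul_nonneg ht.le h1C.le)
    _ ≤ (ε / (2 * (1 + C))) * (1 + C) := mul_le_mul_of_nonneg_right ht4 h1C.le
    _ = ε / 2 := by
        field_simp
    _ < ε := by linarith
  · intro hp
    exact hxne (by simpa using congrArg Prod.fst hp)

/-- For nonzero `a₀,…,a₄` with `a₁a₄ > 0`, the origin is an isolated point of
the cubic curve `G = 0` (for the Euclidean norm) iff `4a₀a₃ + a₂² < 0`. -/
theorem stmt_19 (a₀ a₁ a₂ a₃ a₄ : ℝ)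
    (h₀ : a₀ ≠ 0) (h₁ : a₁ ≠ 0) (h₂ : a₂ ≠ 0) (h₃ : a₃ ≠ 0) (h₄ : a₄ ≠ 0)
    (h : a₁ * a₄ > 0) :
    (∃ ε > (0 : ℝ), ∀ x y : ℝ, cubicG a₀ a₁ a₂ a₃ a₄ x y = 0 →
        Real.sqrt (x ^ 2 + y ^ 2) < ε → (x, y) = ((0 : ℝ), (0 : ℝ))) ↔
      4 * a₀ * a₃ + a₂ ^ 2 < 0 := by
  constructor
  · intro ⟨ε, hε, hiso⟩
    by_contra hΔ'
    push_neg at hΔ'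
    obtain ⟨x, y, hG, hn, hne⟩ := cubic_fwd a₀ a₁ a₂ a₃ a₄ h₀ h₁ h₂ h hΔ' ε hε
    exact hne (hiso x y hG hn)
  · exact cubic_bwd a₀ a₁ a₂ a₃ a₄ h₀ h
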